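/- Let n ≥ 2, k ≥ 1, R ∈ (-1,1), and let ψ be a maximal solution of ψ'(r) = -(1/(k(1-r²)))(ψ(r)²+1)(√(1-r²)ψ(r)² - (n-1)(r-R)ψ(r) + √(1-r²)). Suppose there exists r₀ in the domain with r₀ ∈ (-1,b] and ψ(r₀) > 0, or with r₀ ∈ (b,1) and ψ(r₀) > η₂(r₀). Then there exists r₁ ∈ (-1,r₀) such that ψ(r) → +∞ as r ↓ r₁. -/

import Mathlib

set_option maxHeartbeats 1000000


noncomputable def Bq (n : ℕ) (R r : ℝ) : ℝ :=
  (((n : ℝ) - 1) ^ 2 + 4) * r ^ 2 - 2 * ((n : ℝ) - 1) ^ 2 * R * r + ((n : ℝ) - 1) ^ 2 * R ^ 2 - 4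

noncomputable def rootA (n : ℕ) (R : ℝ) : ℝ :=
  (((n : ℝ) - 1) ^ 2 * R - 2 * Real.sqrt (((n : ℝ) - 1) ^ 2 * (1 - R ^ 2) + 4)) / (((n : ℝ) - 1) ^ 2 + 4)

noncomputable def rootB (n : ℕ) (R : ℝ) : ℝ :=
  (((n : ℝ) - 1) ^ 2 * R + 2 * Real.sqrt (((n : ℝ) - 1) ^ 2 * (1 - R ^ 2) + 4)) / (((n : ℝ) - 1) ^ 2 + 4)

noncomputable def Aq (n : ℕ) (R x r : ℝ) : ℝ :=
  Real.sqrt (1 - r ^ 2) * x ^ 2 - ((n : ℝ) - 1) * (r - R) * x + Real.sqrt (1 - r ^ 2)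

noncomputable def eta1 (n : ℕ) (R r : ℝ) : ℝ :=
  (((n : ℝ) - 1) * (r - R) - Real.sqrt (Bq n R r)) / (2 * Real.sqrt (1 - r ^ 2))

noncomputable def eta2 (n : ℕ) (R r : ℝ) : ℝ :=
  (((n : ℝ) - 1) * (r - R) + Real.sqrt (Bq n R r)) / (2 * Real.sqrt (1 - r ^ 2))

noncomputable def Phi (n k : ℕ) (R r p : ℝ) : ℝ :=
  -(1 / ((k : ℝ) * (1 - r ^ 2))) * (p ^ 2 + 1) *
    (Real.sqrt (1 - r ^ 2) * p ^ 2 - ((n : ℝ) - 1) * (r - R) * p + Real.sqrt (1 - r ^ 2))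


open Set Filter

namespace Stmt8

variable {n : ℕ} {R : ℝ}

lemma Npos {n : ℕ} (hn : 2 ≤ n) : (1:ℝ) ≤ (n:ℝ) - 1 := by
  have : (2:ℝ) ≤ (n:ℝ) := by exact_mod_cast hn
  linarith

lemma Dpos (hn : 2 ≤ n) (hR1 : -1 < R) (hR2 : R < 1) :
    0 < ((n:ℝ)-1)^2 * (1 - R^2) + 4 := by
  have h2 : (0:ℝ) < 1 - R^2 := by nlinarith
  positivity

lemma sqrtD_sq (hn : 2 ≤ n) (hR1 : -1 < R) (hR2 : R < 1) :
    Real.sqrt (((n:ℝ)-1)^2 * (1 - R^2) + 4) ^ 2 = ((n:ℝ)-1)^2 * (1 - R^2) + 4 :=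
  Real.sq_sqrt (Dpos hn hR1 hR2).le

lemma rootA_lt_R (hn : 2 ≤ n) (hR1 : -1 < R) (hR2 : R < 1) : rootA n R < R := by
  have hN := Npos hn
  have hD := Dpos hn hR1 hR2
  have hs := sqrtD_sq hn hR1 hR2
  have hs0 : 0 ≤ Real.sqrt (((n:ℝ)-1)^2 * (1 - R^2) + 4) := Real.sqrt_nonneg _
  have hD4 : 4*R^2 < ((n:ℝ)-1)^2 * (1 - R^2) + 4 := by
    nlinarith [mul_pos (show (0:ℝ) < ((n:ℝ)-1)^2+4 by positivity) (show (0:ℝ) < 1-R^2 by nlinarith)]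
  have hgt : -2 * R < Real.sqrt (((n:ℝ)-1)^2 * (1 - R^2) + 4) := by
    nlinarith [hD4, hs, hs0]
  rw [rootA, div_lt_iff₀ (by positivity)]
  nlinarith
lemma R_lt_rootB (hn : 2 ≤ n) (hR1 : -1 < R) (hR2 : R < 1) : R < rootB n R := by
  have hN := Npos hn
  have hD := Dpos hn hR1 hR2
  have hs := sqrtD_sq hn hR1 hR2
  have hs0 : 0 ≤ Real.sqrt (((n:ℝ)-1)^2 * (1 - R^2) + 4) := Real.sqrt_nonneg _
  have hD4 : 4*R^2 < ((n:ℝ)-1)^2 * (1 - R^2) + 4 := by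
    nlinarith [mul_pos (show (0:ℝ) < ((n:ℝ)-1)^2+4 by positivity) (show (0:ℝ) < 1-R^2 by nlinarith)]
  have hgt : 2 * R < Real.sqrt (((n:ℝ)-1)^2 * (1 - R^2) + 4) := by
    nlinarith [hD4, hs, hs0]
  rw [rootB, lt_div_iff₀ (by positivity)]
  nlinarith

lemma Bq_fac (hn : 2 ≤ n) (hR1 : -1 < R) (hR2 : R < 1) (r : ℝ) :
    Bq n R r = (((n:ℝ)-1)^2 + 4) * (r - rootA n R) * (r - rootB n R) := by
  have hN := Npos hn
  have hs := sqrtD_sq hn hR1 hR2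
  have hC : ((n:ℝ)-1)^2 + 4 ≠ 0 := by positivity
  rw [Bq, rootA, rootB]
  field_simp
  nlinarith [hs]

lemma rootB_lt_one (hn : 2 ≤ n) (hR1 : -1 < R) (hR2 : R < 1) : rootB n R < 1 := by
  have hN := Npos hn
  have hB1 : Bq n R 1 = ((n:ℝ)-1)^2*(1-R)^2 := by rw [Bq]; ring
  have hfac := Bq_fac hn hR1 hR2 1
  have hpos : 0 < Bq n R 1 := by
    rw [hB1]
    have : (0:ℝ) < 1 - R := by linarith
    positivity
  have ha : rootA n R < R := rootA_lt_R hn hR1 hR2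
  have h1a : (0:ℝ) < 1 - rootA n R := by linarith
  rw [hfac] at hpos
  nlinarith [mul_pos (show (0:ℝ) < ((n:ℝ)-1)^2+4 by positivity) h1a]

lemma sqrt1r_pos {r : ℝ} (h1 : -1 < r) (h2 : r < 1) : 0 < Real.sqrt (1 - r^2) :=
  Real.sqrt_pos.2 (by nlinarith)

lemma sqrt1r_sq {r : ℝ} (h1 : -1 < r) (h2 : r < 1) : Real.sqrt (1 - r^2) ^ 2 = 1 - r^2 :=
  Real.sq_sqrt (by nlinarith)

lemma Bq_expand (n : ℕ) (R r : ℝ) : Bq n R r = ((n:ℝ)-1)^2*(r-R)^2 - 4*(1-r^2) := by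
  rw [Bq]; ring

/-- SIGN1 : below rootB, positive p gives Aq > 0 -/
lemma Aq_pos_of_lt_rootB (hn : 2 ≤ n) (hR1 : -1 < R) (hR2 : R < 1) {r p : ℝ}
    (h1 : -1 < r) (h2 : r < 1) (hb : r < rootB n R) (hp : 0 < p) : 0 < Aq n R p r := by
  have hN := Npos hn
  have hs := sqrt1r_pos h1 h2
  have hs2 := sqrt1r_sq h1 h2
  rw [Aq]
  rcases le_or_gt r R with hrR | hrR
  · have hterm : 0 ≤ ((n:ℝ)-1)*(R-r)*p :=
      mul_nonneg (mul_nonneg (by linarith) (by linarith)) hp.le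
    nlinarith [mul_pos hs (mul_pos hp hp), hterm]
  · have ha : rootA n R < r := lt_trans (rootA_lt_R hn hR1 hR2) hrR
    have hBneg : Bq n R r < 0 := by
      rw [Bq_fac hn hR1 hR2]
      have : 0 < (((n:ℝ)-1)^2 + 4) * (r - rootA n R) :=
        mul_pos (by positivity) (by linarith)
      exact mul_neg_of_pos_of_neg this (by linarith)
    rw [Bq_expand] at hBneg
    nlinarith [sq_nonneg (2 * Real.sqrt (1 - r^2) * p - ((n:ℝ)-1)*(r-R))]

/-- factorization of Aq via eta1, eta2 when Bq ≥ 0 -/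
lemma Aq_fac (hn : 2 ≤ n) {r : ℝ} (h1 : -1 < r) (h2 : r < 1) (hB : 0 ≤ Bq n R r) (p : ℝ) :
    Aq n R p r = Real.sqrt (1 - r^2) * (p - eta1 n R r) * (p - eta2 n R r) := by
  have hs := sqrt1r_pos h1 h2
  have hs2 := sqrt1r_sq h1 h2
  have hB2 : Real.sqrt (Bq n R r) ^ 2 = ((n:ℝ)-1)^2*(r-R)^2 - 4*(1-r^2) := by
    rw [Real.sq_sqrt hB, Bq_expand]
  have hs0 : Real.sqrt (1 - r^2) ≠ 0 := ne_of_gt hs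
  have hsum : Real.sqrt (1 - r^2) * (eta1 n R r + eta2 n R r) = ((n:ℝ)-1)*(r-R) := by
    rw [eta1, eta2]; field_simp; ring
  have hprod : eta1 n R r * eta2 n R r = 1 := by
    rw [eta1, eta2]
    rw [div_mul_div_comm, div_eq_one_iff_eq (mul_pos (mul_pos two_pos hs) (mul_pos two_pos hs)).ne']
    linear_combination (-1) * hB2 - 4 * hs2
  calc Aq n R p r = Real.sqrt (1 - r^2) * p^2
        - (Real.sqrt (1 - r^2) * (eta1 n R r + eta2 n R r)) * p
        + Real.sqrt (1 - r^2) * (eta1 n R r * eta2 n R r) := by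
        rw [hsum, hprod, Aq]; ring
    _ = Real.sqrt (1 - r^2) * (p - eta1 n R r) * (p - eta2 n R r) := by ring

lemma Bq_nonneg_of_rootB_le (hn : 2 ≤ n) (hR1 : -1 < R) (hR2 : R < 1) {r : ℝ}
    (hr : rootB n R ≤ r) : 0 ≤ Bq n R r := by
  rw [Bq_fac hn hR1 hR2]
  have ha : rootA n R < r := lt_of_lt_of_le (lt_trans (rootA_lt_R hn hR1 hR2) (R_lt_rootB hn hR1 hR2)) hr
  have : (0:ℝ) ≤ ((n:ℝ)-1)^2 + 4 := by positivity
  have h2 : 0 ≤ r - rootB n R := by linarith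
  have h3 : 0 ≤ r - rootA n R := by linarith
  positivity

lemma eta1_le_eta2 {r : ℝ} (h1 : -1 < r) (h2 : r < 1) : eta1 n R r ≤ eta2 n R r := by
  have hs := sqrt1r_pos h1 h2
  rw [eta1, eta2]
  have h : ((n:ℝ)-1)*(r-R) - Real.sqrt (Bq n R r) ≤ ((n:ℝ)-1)*(r-R) + Real.sqrt (Bq n R r) := by
    nlinarith [Real.sqrt_nonneg (Bq n R r)]
  exact div_le_div_of_nonneg_right h (by positivity) |>.trans_eq rfl

lemma Aq_pos_of_eta2_lt (hn : 2 ≤ n) (hR1 : -1 < R) (hR2 : R < 1) {r p : ℝ}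
    (hbr : rootB n R ≤ r) (h2 : r < 1) (hp : eta2 n R r < p) : 0 < Aq n R p r := by
  have hRr : R < r := lt_of_lt_of_le (R_lt_rootB hn hR1 hR2) hbr
  have h1 : -1 < r := lt_trans hR1 hRr
  have hs := sqrt1r_pos h1 h2
  have hB := Bq_nonneg_of_rootB_le hn hR1 hR2 hbr
  have he := eta1_le_eta2 (n := n) (R := R) h1 h2
  rw [Aq_fac hn h1 h2 hB p]
  exact mul_pos (mul_pos hs (by linarith)) (by linarith)

lemma eta2_pos (hn : 2 ≤ n) (hR1 : -1 < R) (hR2 : R < 1) {r : ℝ}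
    (hbr : rootB n R ≤ r) (h2 : r < 1) : 0 < eta2 n R r := by
  have hN := Npos hn
  have hRr : R < r := lt_of_lt_of_le (R_lt_rootB hn hR1 hR2) hbr
  have h1 : -1 < r := lt_trans hR1 hRr
  have hs := sqrt1r_pos h1 h2
  rw [eta2]
  apply div_pos _ (by positivity)
  have : 0 ≤ Real.sqrt (Bq n R r) := Real.sqrt_nonneg _
  nlinarith

lemma eta2_mono (hn : 2 ≤ n) (hR1 : -1 < R) (hR2 : R < 1) {u v : ℝ}
    (hbu : rootB n R ≤ u) (huv : u ≤ v) (hv : v < 1) : eta2 n R u ≤ eta2 n R v := by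
  have hN := Npos hn
  have hRu : R < u := lt_of_lt_of_le (R_lt_rootB hn hR1 hR2) hbu
  have h1u : -1 < u := lt_trans hR1 hRu
  have hu1 : u < 1 := lt_of_le_of_lt huv hv
  have h1v : -1 < v := lt_of_lt_of_le h1u huv
  have hsu := sqrt1r_pos h1u hu1
  have hsv := sqrt1r_pos h1v hv
  have hRv : R < v := lt_of_lt_of_le hRu huv
  set e := eta2 n R u with he_def
  have he : 0 < e := eta2_pos hn hR1 hR2 hbu hu1
  have hAu : Aq n R e u = 0 := by
    rw [Aq_fac hn h1u hu1 (Bq_nonneg_of_rootB_le hn hR1 hR2 hbu) e, ← he_def, sub_self, mul_zero]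
  have hAu' : Real.sqrt (1-u^2) * (e^2+1) = ((n:ℝ)-1)*(u-R)*e := by
    rw [Aq] at hAu; linarith
  -- monotonicity of the slope function
  have hsq : (u-R)^2*(1-v^2) ≤ (v-R)^2*(1-u^2) := by
    have key : (v-R)^2*(1-u^2) - (u-R)^2*(1-v^2)
        = (v-u)*((u-R)*(1-R*v)+(v-R)*(1-R*u)) := by ring
    have h1' : 0 < 1 - R*v := by nlinarith [sq_nonneg (R - v), sq_nonneg (R + v)]
    have h2' : 0 < 1 - R*u := by nlinarith [sq_nonneg (R - u), sq_nonneg (R + u)]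
    nlinarith [mul_nonneg (sub_nonneg.2 huv)
      (add_nonneg (mul_nonneg (by linarith : (0:ℝ) ≤ u - R) h1'.le)
        (mul_nonneg (by linarith : (0:ℝ) ≤ v - R) h2'.le))]
  have hm : (u-R) * Real.sqrt (1-v^2) ≤ (v-R) * Real.sqrt (1-u^2) := by
    have l1 : (u-R) * Real.sqrt (1-v^2) = Real.sqrt ((u-R)^2*(1-v^2)) := by
      rw [Real.sqrt_mul (sq_nonneg _), Real.sqrt_sq (by linarith : (0:ℝ) ≤ u - R)]
    have l2 : (v-R) * Real.sqrt (1-u^2) = Real.sqrt ((v-R)^2*(1-u^2)) := by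
      rw [Real.sqrt_mul (sq_nonneg _), Real.sqrt_sq (by linarith : (0:ℝ) ≤ v - R)]
    rw [l1, l2]
    exact Real.sqrt_le_sqrt hsq
  by_contra hlt
  push_neg at hlt
  have hApos : 0 < Aq n R e v := Aq_pos_of_eta2_lt hn hR1 hR2 (le_trans hbu huv) hv hlt
  have hcomb : Aq n R e v * Real.sqrt (1-u^2)
      = (((n:ℝ)-1)*(u-R)*Real.sqrt (1-v^2) - ((n:ℝ)-1)*(v-R)*Real.sqrt (1-u^2)) * e := by
    rw [Aq]; linear_combination Real.sqrt (1-v^2) * hAu'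
  nlinarith [mul_pos hApos hsu, mul_nonneg (mul_nonneg (sub_nonneg.2 hm) he.le) (by linarith : (0:ℝ) ≤ (n:ℝ)-1)]

lemma Aq_nonneg_at_rootB (hn : 2 ≤ n) (hR1 : -1 < R) (hR2 : R < 1) (p : ℝ) :
    0 ≤ Aq n R p (rootB n R) := by
  have h1 : -1 < rootB n R := lt_trans hR1 (R_lt_rootB hn hR1 hR2)
  have h2 : rootB n R < 1 := rootB_lt_one hn hR1 hR2
  have hB : Bq n R (rootB n R) = 0 := by
    rw [Bq_fac hn hR1 hR2, sub_self, mul_zero]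
  have heta : eta1 n R (rootB n R) = eta2 n R (rootB n R) := by
    rw [eta1, eta2, hB, Real.sqrt_zero, sub_zero, add_zero]
  rw [Aq_fac hn h1 h2 hB.ge p, heta]
  calc (0:ℝ) ≤ Real.sqrt (1 - rootB n R ^2) * (p - eta2 n R (rootB n R))^2 :=
        mul_nonneg (Real.sqrt_nonneg _) (sq_nonneg _)
    _ = _ := by ring

lemma Phi_eq (n k : ℕ) (R r p : ℝ) :
    Phi n k R r p = -(1/((k:ℝ)*(1-r^2))) * (p^2+1) * Aq n R p r := rfl

lemma Phi_neg (hk : 1 ≤ k) {r p : ℝ} (h1 : -1 < r) (h2 : r < 1)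
    (hA : 0 < Aq n R p r) : Phi n k R r p < 0 := by
  have hkp : (0:ℝ) < (k:ℝ) := by exact_mod_cast hk
  have h1r : (0:ℝ) < 1 - r^2 := by nlinarith
  rw [Phi_eq, neg_mul, neg_mul, neg_lt_zero]
  exact mul_pos (mul_pos (by positivity) (by positivity)) hA

lemma Phi_nonpos (hk : 1 ≤ k) {r p : ℝ} (h1 : -1 < r) (h2 : r < 1)
    (hA : 0 ≤ Aq n R p r) : Phi n k R r p ≤ 0 := by
  have hkp : (0:ℝ) < (k:ℝ) := by exact_mod_cast hk
  have h1r : (0:ℝ) < 1 - r^2 := by nlinarith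
  rw [Phi_eq, neg_mul, neg_mul, neg_nonpos]
  exact mul_nonneg (mul_nonneg (by positivity) (by positivity)) hA

lemma eta2_continuousAt {r : ℝ} (h1 : -1 < r) (h2 : r < 1) :
    ContinuousAt (fun s => eta2 n R s) r := by
  have hs := sqrt1r_pos h1 h2
  have hBc : Continuous (fun s : ℝ => Bq n R s) := by unfold Bq; continuity
  have hnum : Continuous (fun s : ℝ => ((n:ℝ)-1)*(s-R) + Real.sqrt (Bq n R s)) :=
    (continuous_const.mul (continuous_id.sub continuous_const)).add
      (Real.continuous_sqrt.comp hBc)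
  have hden : Continuous (fun s : ℝ => 2 * Real.sqrt (1 - s^2)) := by continuity
  have h := hnum.continuousAt.div hden.continuousAt (by positivity : (2:ℝ) * Real.sqrt (1-r^2) ≠ 0)
  exact h

end Stmt8

open Stmt8 in
theorem stmt_8 (n k : ℕ) (hn : 2 ≤ n) (hk : 1 ≤ k) (R : ℝ) (hR1 : -1 < R) (hR2 : R < 1)
    (x y : ℝ) (hx : -1 ≤ x) (hxy : x < y) (hy : y ≤ 1) (ψ : ℝ → ℝ)
    (hode : ∀ r ∈ Set.Ioo x y, HasDerivAt ψ (Phi n k R r (ψ r)) r)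
    (hmax : ∀ x' y' : ℝ, ∀ g : ℝ → ℝ, x' ≤ x → y ≤ y' → Set.Ioo x y ⊂ Set.Ioo x' y' →
      Set.EqOn g ψ (Set.Ioo x y) →
      ¬ (∀ r ∈ Set.Ioo x' y', HasDerivAt g (Phi n k R r (g r)) r))
    (r₀ : ℝ) (hr₀ : r₀ ∈ Set.Ioo x y)
    (hcase : (r₀ ∈ Set.Ioc (-1 : ℝ) (rootB n R) ∧ 0 < ψ r₀) ∨
      (r₀ ∈ Set.Ioo (rootB n R) 1 ∧ eta2 n R r₀ < ψ r₀)) :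
    ∃ r₁ ∈ Set.Ioo (-1 : ℝ) r₀,
      Filter.Tendsto ψ (nhdsWithin r₁ (Set.Ioi r₁)) Filter.atTop := by
  classical
  obtain ⟨hxr₀, hr₀y⟩ := hr₀
  have hN := Npos hn
  have hRb : R < rootB n R := R_lt_rootB hn hR1 hR2
  have hb1 : rootB n R < 1 := rootB_lt_one hn hR1 hR2
  have h1b : -1 < rootB n R := lt_trans hR1 hRb
  have hr₀1 : r₀ < 1 := lt_of_lt_of_le hr₀y hy
  have h1r₀ : -1 < r₀ := lt_of_le_of_lt hx hxr₀
  have hk0 : (0:ℝ) < (k:ℝ) := by exact_mod_cast hk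
  set b := rootB n R with hb_def
  -- the invariant predicate
  set Good : ℝ → Prop := fun s => 0 < ψ s ∧ (b < s → eta2 n R s < ψ s) with hGood_def
  have hGr₀ : Good r₀ := by
    rcases hcase with ⟨⟨_, hr₀b⟩, hpos⟩ | ⟨⟨hbr₀, _⟩, hgt⟩
    · exact ⟨hpos, fun hb' => absurd hb' (not_lt.2 hr₀b)⟩
    · exact ⟨lt_trans (eta2_pos hn hR1 hR2 hbr₀.le hr₀1) hgt, fun _ => hgt⟩
  -- sign of Aq under the invariant
  have hA_nonneg : ∀ s ∈ Set.Ioo x r₀, Good s → 0 ≤ Aq n R (ψ s) s := by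
    intro s hs hGs
    have h1s : -1 < s := lt_of_le_of_lt hx hs.1
    have hs1 : s < 1 := lt_trans hs.2 hr₀1
    rcases lt_trichotomy s b with hlt | heq | hgt
    · exact (Aq_pos_of_lt_rootB hn hR1 hR2 h1s hs1 hlt hGs.1).le
    · rw [heq]; exact Aq_nonneg_at_rootB hn hR1 hR2 _
    · exact (Aq_pos_of_eta2_lt hn hR1 hR2 hgt.le hs1 (hGs.2 hgt)).le
  have hA_pos : ∀ s ∈ Set.Ioo x r₀, s ≠ b → Good s → 0 < Aq n R (ψ s) s := by
    intro s hs hne hGs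
    have h1s : -1 < s := lt_of_le_of_lt hx hs.1
    have hs1 : s < 1 := lt_trans hs.2 hr₀1
    rcases lt_or_gt_of_ne hne with hlt | hgt
    · exact Aq_pos_of_lt_rootB hn hR1 hR2 h1s hs1 hlt hGs.1
    · exact Aq_pos_of_eta2_lt hn hR1 hR2 hgt.le hs1 (hGs.2 hgt)
  -- invariance of Good going backwards
  have hGood_all : ∀ r ∈ Set.Ioc x r₀, Good r := by
    set T : Set ℝ := {r | r ∈ Set.Ioc x r₀ ∧ ∀ s ∈ Set.Icc r r₀, Good s} with hT_def
    have hTr₀ : r₀ ∈ T := ⟨⟨hxr₀, le_rfl⟩, fun s hs => by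
      have hsr : s = r₀ := le_antisymm hs.2 hs.1
      rw [hsr]; exact hGr₀⟩
    have hTne : T.Nonempty := ⟨r₀, hTr₀⟩
    have hTbdd : BddBelow T := ⟨x, fun t ht => ht.1.1.le⟩
    set ρ := sInf T with hρ_def
    have hρ_le : ρ ≤ r₀ := csInf_le hTbdd hTr₀
    have hρ_ge : x ≤ ρ := le_csInf hTne fun t ht => ht.1.1.le
    have hGoodIoc : ∀ s ∈ Set.Ioc ρ r₀, Good s := by
      intro s hs
      obtain ⟨t, htT, hts⟩ := (csInf_lt_iff hTbdd hTne).1 hs.1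
      exact htT.2 s ⟨hts.le, hs.2⟩
    have hρx : ρ = x := by
      by_contra hne
      have hxρ : x < ρ := lt_of_le_of_ne hρ_ge (Ne.symm hne)
      have hIccsub : Set.Icc ρ r₀ ⊆ Set.Ioo x y := fun s hs =>
        ⟨lt_of_lt_of_le hxρ hs.1, lt_of_le_of_lt hs.2 hr₀y⟩
      have hcont : ContinuousOn ψ (Set.Icc ρ r₀) := fun s hs =>
        ((hode s (hIccsub hs)).continuousAt).continuousWithinAt
      have hGIoo : ∀ s ∈ Set.Ioo ρ r₀, Good s := fun s hs => hGoodIoc s ⟨hs.1, hs.2.le⟩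
      have hsubx : Set.Ioo ρ r₀ ⊆ Set.Ioo x r₀ := fun s hs => ⟨lt_trans hxρ hs.1, hs.2⟩
      have hanti' : AntitoneOn ψ (Set.Icc ρ r₀) := by
        apply antitoneOn_of_deriv_nonpos (convex_Icc _ _) hcont
        · intro s hs
          rw [interior_Icc] at hs
          exact ((hode s (hIccsub (Set.Ioo_subset_Icc_self hs))).differentiableAt).differentiableWithinAt
        · intro s hs
          rw [interior_Icc] at hs
          rw [(hode s (hIccsub (Set.Ioo_subset_Icc_self hs))).deriv]
          have h1s : -1 < s := lt_of_le_of_lt hx (lt_trans hxρ hs.1)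
          have hs1 : s < 1 := lt_trans hs.2 hr₀1
          exact Phi_nonpos hk h1s hs1 (hA_nonneg s (hsubx hs) (hGIoo s hs))
      have hψρ : 0 < ψ ρ :=
        lt_of_lt_of_le hGr₀.1 (hanti' (Set.left_mem_Icc.2 hρ_le) (Set.right_mem_Icc.2 hρ_le) hρ_le)
      have hGρ : Good ρ := by
        refine ⟨hψρ, fun hbρ => ?_⟩
        rcases eq_or_lt_of_le hρ_le with heq | hltρ
        · rw [heq]; exact hGr₀.2 (heq ▸ hbρ)
        · have hstrict : StrictAntiOn ψ (Set.Icc ρ r₀) := by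
            apply strictAntiOn_of_deriv_neg (convex_Icc _ _) hcont
            intro s hs
            rw [interior_Icc] at hs
            rw [(hode s (hIccsub (Set.Ioo_subset_Icc_self hs))).deriv]
            have h1s : -1 < s := lt_of_le_of_lt hx (lt_trans hxρ hs.1)
            have hs1 : s < 1 := lt_trans hs.2 hr₀1
            exact Phi_neg hk h1s hs1
              (hA_pos s (hsubx hs) (ne_of_gt (lt_trans hbρ hs.1)) (hGIoo s hs))
          set s₁ := (ρ + r₀)/2 with hs₁_def
          have hs₁1 : ρ < s₁ := by rw [hs₁_def]; linarith
          have hs₁2 : s₁ < r₀ := by rw [hs₁_def]; linarith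
          have hG₁ := hGIoo s₁ ⟨hs₁1, hs₁2⟩
          have hb₁ : b < s₁ := lt_trans hbρ hs₁1
          have hm := eta2_mono hn hR1 hR2 hbρ.le hs₁1.le (lt_trans hs₁2 hr₀1)
          have hψ₁ : ψ s₁ < ψ ρ := hstrict (Set.left_mem_Icc.2 hρ_le)
            (Set.Ioo_subset_Icc_self ⟨hs₁1, hs₁2⟩) hs₁1
          have := hG₁.2 hb₁
          linarith
      have hρmem : ρ ∈ Set.Ioo x y := ⟨hxρ, lt_of_le_of_lt hρ_le hr₀y⟩
      have hcρ : ContinuousAt ψ ρ := (hode ρ hρmem).continuousAt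
      have h1ρ : -1 < ρ := lt_of_le_of_lt hx hxρ
      have hρ1 : ρ < 1 := lt_of_le_of_lt hρ_le hr₀1
      obtain ⟨δ, hδpos, hδ⟩ : ∃ δ > 0, ∀ s ∈ Set.Ioo (ρ - δ) ρ, Good s := by
        rcases le_or_gt ρ b with hρb | hbρ
        · have hev : ∀ᶠ s in nhds ρ, 0 < ψ s := hcρ (Ioi_mem_nhds hψρ)
          obtain ⟨δ, hδpos, hball⟩ := Metric.eventually_nhds_iff.1 hev
          refine ⟨δ, hδpos, fun s hs => ⟨hball ?_, fun hbs => absurd hbs (not_lt.2 (hs.2.le.trans hρb))⟩⟩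
          rw [Real.dist_eq, abs_lt]
          constructor <;> linarith [hs.1, hs.2]
        · have hetacont : ContinuousAt (fun s => eta2 n R s) ρ := eta2_continuousAt h1ρ hρ1
          have hsubc : ContinuousAt (fun s => ψ s - eta2 n R s) ρ := hcρ.sub hetacont
          have hgap : (0:ℝ) < ψ ρ - eta2 n R ρ := sub_pos.2 (hGρ.2 hbρ)
          have hev1 : ∀ᶠ s in nhds ρ, 0 < ψ s - eta2 n R s := hsubc (Ioi_mem_nhds hgap)
          have hev2 : ∀ᶠ s in nhds ρ, 0 < ψ s := hcρ (Ioi_mem_nhds hψρ)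
          obtain ⟨δ, hδpos, hball⟩ := Metric.eventually_nhds_iff.1 (hev1.and hev2)
          refine ⟨δ, hδpos, fun s hs => ?_⟩
          have hd : dist s ρ < δ := by
            rw [Real.dist_eq, abs_lt]; constructor <;> linarith [hs.1, hs.2]
          exact ⟨(hball hd).2, fun _ => sub_pos.1 (hball hd).1⟩
      set r' := max ((x + ρ)/2) (ρ - δ/2) with hr'_def
      have hxr' : x < r' := lt_of_lt_of_le (by linarith) (le_max_left _ _)
      have hr'ρ : r' < ρ := max_lt (by linarith) (by linarith)
      have hr'T : r' ∈ T := by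
        refine ⟨⟨hxr', le_trans hr'ρ.le hρ_le⟩, fun s hs => ?_⟩
        rcases lt_or_ge s ρ with hsρ | hρs
        · refine hδ s ⟨lt_of_lt_of_le ?_ hs.1, hsρ⟩
          calc ρ - δ < ρ - δ/2 := by linarith
            _ ≤ r' := le_max_right _ _
        · rcases eq_or_lt_of_le hρs with heq | hlt
          · rw [← heq]; exact hGρ
          · exact hGoodIoc s ⟨hlt, hs.2⟩
      have hle := csInf_le hTbdd hr'T
      rw [← hρ_def] at hle
      linarith
    intro r hr
    have hρr : ρ < r := by rw [hρx]; exact hr.1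
    obtain ⟨t, htT, htr⟩ := (csInf_lt_iff hTbdd hTne).1 hρr
    exact htT.2 r ⟨htr.le, hr.2⟩
  -- ψ is antitone on (x, r₀]
  have hanti : AntitoneOn ψ (Set.Ioc x r₀) := by
    apply antitoneOn_of_deriv_nonpos (convex_Ioc _ _)
    · exact fun s hs => ((hode s ⟨hs.1, lt_of_le_of_lt hs.2 hr₀y⟩).continuousAt).continuousWithinAt
    · intro s hs
      rw [interior_Ioc] at hs
      exact ((hode s ⟨hs.1, lt_trans hs.2 hr₀y⟩).differentiableAt).differentiableWithinAt
    · intro s hs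
      rw [interior_Ioc] at hs
      rw [(hode s ⟨hs.1, lt_trans hs.2 hr₀y⟩).deriv]
      have h1s : -1 < s := lt_of_le_of_lt hx hs.1
      have hs1 : s < 1 := lt_trans hs.2 hr₀1
      exact Phi_nonpos hk h1s hs1 (hA_nonneg s hs (hGood_all s ⟨hs.1, hs.2.le⟩))
  have hclow : ∀ r ∈ Set.Ioc x r₀, ψ r₀ ≤ ψ r := fun r hr =>
    hanti hr (Set.right_mem_Ioc.2 hxr₀) hr.2
  -- x is strictly greater than -1
  have hx1 : -1 < x := by
    by_contra hxne
    have hxeq : x = -1 := le_antisymm (not_lt.1 hxne) hx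
    set c := ψ r₀ with hc_def
    have hc : 0 < c := hGr₀.1
    set γ := ((n:ℝ)-1) * (R+1) / (4*(k:ℝ)) with hγ_def
    have hγ : 0 < γ := div_pos (mul_pos (by linarith) (by linarith)) (by positivity)
    set u₀ := min ((R-1)/2) ((x + r₀)/2) with hu₀_def
    have hu₀x : x < u₀ := lt_min (by rw [hxeq]; linarith) (by linarith)
    have hu₀r₀ : u₀ < r₀ := lt_of_le_of_lt (min_le_right _ _) (by linarith)
    have hu₀R : u₀ ≤ (R-1)/2 := min_le_left _ _
    have hu₀y : u₀ < y := lt_trans hu₀r₀ hr₀y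
    have hmem : ∀ s ∈ Set.Ioc x u₀, s ∈ Set.Ioo x y := fun s hs =>
      ⟨hs.1, lt_of_le_of_lt hs.2 hu₀y⟩
    have hψpos : ∀ s ∈ Set.Ioc x u₀, 0 < ψ s := fun s hs =>
      (hGood_all s ⟨hs.1, le_trans hs.2 hu₀r₀.le⟩).1
    have hψc : ∀ s ∈ Set.Ioc x u₀, c ≤ ψ s := fun s hs =>
      hclow s ⟨hs.1, le_trans hs.2 hu₀r₀.le⟩
    set E : ℝ → ℝ := fun r => (ψ r)⁻¹ - γ * c * Real.log (1+r) with hE_def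
    have hEd : ∀ s ∈ Set.Ioc x u₀,
        HasDerivAt E (-(Phi n k R s (ψ s)) / (ψ s)^2 - γ*c*(1/(1+s))) s := by
      intro s hs
      have h1s : (-1:ℝ) < s := by have h := hs.1; rw [hxeq] at h; exact h
      have hd1 : HasDerivAt (fun r => (ψ r)⁻¹) (-(Phi n k R s (ψ s)) / (ψ s)^2) s :=
        (hode s (hmem s hs)).inv (ne_of_gt (hψpos s hs))
      have hd2 : HasDerivAt (fun r => Real.log (1+r)) (1/(1+s)) s := by
        have h := HasDerivAt.log ((hasDerivAt_id s).const_add (1:ℝ))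
          (by intro hh; linarith [hh] : (1:ℝ) + s ≠ 0)
        simpa using h
      exact hd1.sub (hd2.const_mul (γ*c))
    have hkey : ∀ s ∈ Set.Ioo x u₀, 0 ≤ -(Phi n k R s (ψ s)) / (ψ s)^2 - γ*c*(1/(1+s)) := by
      intro s hs
      have hs' : s ∈ Set.Ioc x u₀ := ⟨hs.1, hs.2.le⟩
      set p := ψ s with hp_def
      have hp : 0 < p := hψpos s hs'
      have hcp : c ≤ p := hψc s hs'
      have h1s : (-1:ℝ) < s := by have h := hs.1; rw [hxeq] at h; exact h
      have hsR : s ≤ (R-1)/2 := le_trans hs.2.le hu₀R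
      have hs1 : s < 1 := by linarith
      have hRs : (R+1)/2 ≤ R - s := by linarith
      have he : (0:ℝ) < 1 - s^2 := by nlinarith
      have h1s' : (0:ℝ) < 1 + s := by linarith
      have hA0 : 0 ≤ ((n:ℝ)-1)*(R-s)*p :=
        mul_nonneg (mul_nonneg (by linarith) (by linarith)) hp.le
      have step1 : ((n:ℝ)-1)*(R-s)*p ≤ Aq n R p s := by
        rw [Aq]
        nlinarith [Real.sqrt_nonneg (1-s^2), mul_nonneg (Real.sqrt_nonneg (1-s^2)) (sq_nonneg p)]
      have hK : (0:ℝ) < (k:ℝ)*(1-s^2) := by positivity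
      have hΦK : -(Phi n k R s p) * ((k:ℝ)*(1-s^2)) = (p^2+1) * Aq n R p s := by
        rw [Phi_eq]
        field_simp
      have master : γ*c*p^2*((k:ℝ)*(1-s^2)) ≤ (p^2+1)*Aq n R p s*(1+s) := by
        have m0 : γ*c*p^2*((k:ℝ)*(1-s^2)) = ((n:ℝ)-1)*(R+1)*c*p^2*(1-s^2)/4 := by
          rw [hγ_def]; field_simp
        have minner : (R+1)*(1-s)*c ≤ 4*(R-s)*p := by
          have t1 : (R+1)*(1-s)*c ≤ (R+1)*2*c :=
            mul_le_mul_of_nonneg_right (mul_le_mul_of_nonneg_left (by linarith) (by linarith)) hc.le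
          have t2 : (R+1)*2*c ≤ 4*(R-s)*c := mul_le_mul_of_nonneg_right (by linarith) hc.le
          have t3 : 4*(R-s)*c ≤ 4*(R-s)*p := mul_le_mul_of_nonneg_left hcp (by linarith)
          linarith
        have m1 : ((n:ℝ)-1)*(R+1)*c*p^2*(1-s^2)/4 ≤ p^2*(((n:ℝ)-1)*(R-s)*p)*(1+s) := by
          nlinarith [mul_le_mul_of_nonneg_right minner
            (mul_nonneg (mul_nonneg (by linarith : (0:ℝ) ≤ (n:ℝ)-1) (sq_nonneg p)) h1s'.le)]
        have m2 : p^2*(((n:ℝ)-1)*(R-s)*p)*(1+s) ≤ (p^2+1)*Aq n R p s*(1+s) := by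
          apply mul_le_mul_of_nonneg_right _ h1s'.le
          calc p^2*(((n:ℝ)-1)*(R-s)*p) ≤ (p^2+1)*(((n:ℝ)-1)*(R-s)*p) := by nlinarith [hA0]
            _ ≤ (p^2+1)*Aq n R p s := by nlinarith [step1, sq_nonneg p]
        rw [m0]; linarith
      have hdivided : γ*c*p^2 ≤ (-(Phi n k R s p))*(1+s) := by
        apply le_of_mul_le_mul_right _ hK
        calc γ*c*p^2*((k:ℝ)*(1-s^2)) ≤ (p^2+1)*Aq n R p s*(1+s) := master
          _ = (-(Phi n k R s p))*(1+s)*((k:ℝ)*(1-s^2)) := by rw [← hΦK]; ring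
      have e1 : γ*c*(1/(1+s)) ≤ -(Phi n k R s p)/p^2 := by
        rw [mul_one_div, div_le_div_iff₀ h1s' (by positivity : (0:ℝ) < p^2)]
        linarith
      linarith
    have hmono : MonotoneOn E (Set.Ioc x u₀) := by
      apply monotoneOn_of_deriv_nonneg (convex_Ioc _ _)
      · exact fun s hs => (hEd s hs).continuousAt.continuousWithinAt
      · intro s hs; rw [interior_Ioc] at hs
        exact (hEd s ⟨hs.1, hs.2.le⟩).differentiableAt.differentiableWithinAt
      · intro s hs; rw [interior_Ioc] at hs
        rw [(hEd s ⟨hs.1, hs.2.le⟩).deriv]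
        exact hkey s hs
    set J := Real.log (1+u₀) - (ψ u₀)⁻¹/(γ*c) - 1 with hJ_def
    set rh := min (Real.exp J - 1) ((x + u₀)/2) with hrh_def
    have h1rh : x < rh := by
      apply lt_min
      · rw [hxeq]; linarith [Real.exp_pos J]
      · linarith
    have hrhu : rh ≤ u₀ := le_trans (min_le_right _ _) (by linarith)
    have hrhmem : rh ∈ Set.Ioc x u₀ := ⟨h1rh, hrhu⟩
    have h1rh' : (0:ℝ) < 1 + rh := by
      have h := h1rh; rw [hxeq] at h; linarith
    have hlogrh : Real.log (1+rh) ≤ J := by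
      rw [Real.log_le_iff_le_exp h1rh']
      linarith [min_le_left (Real.exp J - 1) ((x+u₀)/2)]
    have hEle : E rh ≤ E u₀ := hmono hrhmem (Set.right_mem_Ioc.2 hu₀x) hrhu
    have hinv_pos : 0 < (ψ rh)⁻¹ := inv_pos.2 (hψpos rh hrhmem)
    have hγc : 0 < γ*c := mul_pos hγ hc
    simp only [hE_def] at hEle
    have hJmul : γ*c*J = γ*c*Real.log (1+u₀) - (ψ u₀)⁻¹ - γ*c := by
      rw [hJ_def, mul_sub, mul_sub, mul_one, mul_div_cancel₀ _ (ne_of_gt hγc)]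
    have hstep : γ * c * Real.log (1+rh) ≤ γ * c * J :=
      mul_le_mul_of_nonneg_left hlogrh hγc.le
    clear_value rh J u₀ E γ c
    linarith [hEle, hinv_pos, hγc, hJmul, hstep]
  -- ψ is unbounded above near x
  have hub : ¬ BddAbove (ψ '' Set.Ioo x r₀) := by
    intro hbdd
    have hxlt1 : x < 1 := lt_of_lt_of_le hxy hy
    have hneio : (Set.Ioo x r₀).Nonempty := Set.nonempty_Ioo.2 hxr₀
    have hmono : MonotoneOn (fun r => -ψ r) (Set.Ioo x r₀) := fun u hu v hv huv =>
      neg_le_neg (hanti ⟨hu.1, hu.2.le⟩ ⟨hv.1, hv.2.le⟩ huv)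
    have hbddb : BddBelow ((fun r => -ψ r) '' Set.Ioo x r₀) := by
      obtain ⟨M, hM⟩ := hbdd
      refine ⟨-M, fun z hz => ?_⟩
      obtain ⟨w, hw, rfl⟩ := hz
      have := hM (Set.mem_image_of_mem ψ hw)
      simpa using neg_le_neg this
    have htd := MonotoneOn.tendsto_nhdsWithin_Ioo_right hneio hmono hbddb
    set L : ℝ := -sInf ((fun r => -ψ r) '' Set.Ioo x r₀) with hL_def
    have hψtd : Filter.Tendsto ψ (nhdsWithin x (Set.Ioi x)) (nhds L) := by
      have h2 := htd.neg
      simpa using h2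
    have h1x2 : (0:ℝ) < 1 - x^2 := by nlinarith
    have hKx : ((k:ℝ) * (1 - x^2)) ≠ 0 := by positivity
    have cdfst : ContDiffAt ℝ 1 (fun q : ℝ × ℝ => q.1) (x, L) := contDiff_fst.contDiffAt
    have cdsnd : ContDiffAt ℝ 1 (fun q : ℝ × ℝ => q.2) (x, L) := contDiff_snd.contDiffAt
    have cdin : ContDiffAt ℝ 1 (fun q : ℝ × ℝ => 1 - q.1^2) (x, L) :=
      contDiffAt_const.sub (cdfst.pow 2)
    have cdsqrt : ContDiffAt ℝ 1 (fun q : ℝ × ℝ => Real.sqrt (1 - q.1^2)) (x, L) := by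
      have h := (Real.contDiffAt_sqrt (x := 1 - x^2) (ne_of_gt h1x2)).comp (x, L) cdin
      exact h
    have cdAq : ContDiffAt ℝ 1 (fun q : ℝ × ℝ =>
        Real.sqrt (1 - q.1^2) * q.2^2 - ((n:ℝ)-1) * (q.1 - R) * q.2 + Real.sqrt (1 - q.1^2)) (x, L) :=
      ((cdsqrt.mul (cdsnd.pow 2)).sub
        ((contDiffAt_const.mul (cdfst.sub contDiffAt_const)).mul cdsnd)).add cdsqrt
    have cdcoef : ContDiffAt ℝ 1 (fun q : ℝ × ℝ => -(1 / ((k:ℝ) * (1 - q.1^2)))) (x, L) :=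
      (contDiffAt_const.div (contDiffAt_const.mul cdin) hKx).neg
    have cdPhi : ContDiffAt ℝ 1 (fun q : ℝ × ℝ => Phi n k R q.1 q.2) (x, L) := by
      unfold Phi
      exact (cdcoef.mul ((cdsnd.pow 2).add contDiffAt_const)).mul cdAq
    have hVc : ContDiffAt ℝ 1 (fun q : ℝ × ℝ => ((1:ℝ), Phi n k R q.1 q.2)) (x, L) :=
      contDiffAt_const.prodMk cdPhi
    obtain ⟨f, hf0, ε, hε, hf⟩ := hVc.exists_forall_mem_closedBall_exists_eq_forall_mem_Ioo_hasDerivAt₀ (0:ℝ)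
    have hfst : ∀ u ∈ Set.Ioo (0 - ε) (0 + ε), HasDerivAt (fun w => (f w).1) 1 u := by
      intro u hu
      have h := (ContinuousLinearMap.fst ℝ ℝ ℝ).hasFDerivAt.comp_hasDerivAt u (hf u hu)
      exact (by simpa using h : HasDerivAt (Prod.fst ∘ f) 1 u)
    have hsnd : ∀ u ∈ Set.Ioo (0 - ε) (0 + ε),
        HasDerivAt (fun w => (f w).2) (Phi n k R ((f u).1) ((f u).2)) u := by
      intro u hu
      have h := (ContinuousLinearMap.snd ℝ ℝ ℝ).hasFDerivAt.comp_hasDerivAt u (hf u hu)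
      exact (by simpa using h : HasDerivAt (Prod.snd ∘ f) (Phi n k R ((f u).1) ((f u).2)) u)
    have hmem0 : (0:ℝ) ∈ Set.Ioo (0-ε) (0+ε) := ⟨by linarith, by linarith⟩
    have hf1lin : ∀ t ∈ Set.Ioo (0 - ε) (0 + ε), (f t).1 = x + t := by
      have hsub : ∀ a b : ℝ, a ∈ Set.Ioo (0-ε) (0+ε) → b ∈ Set.Ioo (0-ε) (0+ε) → a ≤ b →
          (f b).1 - (x + b) = (f a).1 - (x + a) := by
        intro a b ha hb hab
        have hcont : ContinuousOn (fun w => (f w).1 - (x + w)) (Set.Icc a b) := by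
          intro z hz
          have hz' : z ∈ Set.Ioo (0-ε) (0+ε) := ⟨lt_of_lt_of_le ha.1 hz.1, lt_of_le_of_lt hz.2 hb.2⟩
          exact ((hfst z hz').sub ((hasDerivAt_id z).const_add x)).continuousAt.continuousWithinAt
        have hderiv : ∀ z ∈ Set.Ico a b,
            HasDerivWithinAt (fun w => (f w).1 - (x + w)) 0 (Set.Ici z) z := by
          intro z hz
          have hz' : z ∈ Set.Ioo (0-ε) (0+ε) := ⟨lt_of_lt_of_le ha.1 hz.1, lt_trans hz.2 hb.2⟩
          have h := (hfst z hz').sub ((hasDerivAt_id z).const_add x)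
          exact (by simpa using h.hasDerivWithinAt : HasDerivWithinAt ((fun w => (f w).1) - fun w => x + w) 0 (Set.Ici z) z)
        have := constant_of_has_deriv_right_zero hcont hderiv b (Set.right_mem_Icc.2 hab)
        simpa using this
      intro t ht
      rcases le_total t 0 with h|h
      · have h2 := hsub t 0 ht hmem0 h
        rw [hf0] at h2
        simp at h2
        linarith
      · have h2 := hsub 0 t hmem0 ht h
        rw [hf0] at h2
        simp at h2
        linarith
    set g : ℝ → ℝ := fun r => if x < r then ψ r else (f (r - x)).2 with hg_def
    have hgψ : ∀ w, x < w → g w = ψ w := fun w hw => if_pos hw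
    have hgf : ∀ w, ¬ x < w → g w = (f (w - x)).2 := fun w hw => if_neg hw
    have hgx : g x = L := by
      rw [hgf x (lt_irrefl x), sub_self, hf0]
    have hleft : ∀ u, u - x ∈ Set.Ioo (0-ε) (0+ε) →
        HasDerivAt (fun w => (f (w - x)).2) (Phi n k R ((f (u-x)).1) ((f (u-x)).2)) u := by
      intro u hu
      exact HasDerivAt.comp_sub_const u x (hsnd (u - x) hu)
    have hgderiv : ∀ r ∈ Set.Ioo (x - ε/2) y, HasDerivAt g (Phi n k R r (g r)) r := by
      intro r hr
      rcases lt_trichotomy r x with hlt | heq | hgt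
      · have hrx : r - x ∈ Set.Ioo (0-ε) (0+ε) := ⟨by linarith [hr.1], by linarith⟩
        have hd := hleft r hrx
        rw [hf1lin (r-x) hrx] at hd
        have hxr : x + (r - x) = r := by ring
        rw [hxr] at hd
        have hev : g =ᶠ[nhds r] (fun w => (f (w - x)).2) := by
          filter_upwards [isOpen_Iio.mem_nhds hlt] with w hw
          exact hgf w (not_lt.2 hw.le)
        have hgr : g r = (f (r-x)).2 := hgf r (not_lt.2 hlt.le)
        rw [hgr]
        exact hd.congr_of_eventuallyEq hev
      · rw [heq, hgx]
        have hd' : HasDerivAt (fun w => (f (w - x)).2) (Phi n k R x L) x := by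
          have h := hleft x (by rw [sub_self]; exact hmem0)
          rw [sub_self] at h
          simpa [hf0] using h
        have hIic : HasDerivWithinAt g (Phi n k R x L) (Set.Iic x) x := by
          refine hd'.hasDerivWithinAt.congr (fun w hw => hgf w (not_lt.2 hw)) ?_
          rw [hgf x (lt_irrefl x), sub_self, hf0]
        have hIci : HasDerivWithinAt g (Phi n k R x L) (Set.Ici x) x := by
          apply hasDerivWithinAt_Ici_of_tendsto_deriv (s := Set.Ioo x r₀)
          · intro w hw
            have hev : g =ᶠ[nhds w] ψ := by
              filter_upwards [isOpen_Ioi.mem_nhds hw.1] with z hz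
              exact hgψ z hz
            exact (((hode w ⟨hw.1, lt_trans hw.2 hr₀y⟩).congr_of_eventuallyEq
              hev).differentiableAt).differentiableWithinAt
          · have hcwa : Filter.Tendsto g (nhdsWithin x (Set.Ioo x r₀)) (nhds L) := by
              apply Filter.Tendsto.congr' _ (hψtd.mono_left (nhdsWithin_mono x Set.Ioo_subset_Ioi_self))
              filter_upwards [self_mem_nhdsWithin] with w hw
              exact (hgψ w hw.1).symm
            unfold ContinuousWithinAt
            rw [hgx]
            exact hcwa
          · exact Ioo_mem_nhdsGT hxr₀
          · have hPhiC : ContinuousAt (fun q : ℝ × ℝ => Phi n k R q.1 q.2) (x, L) :=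
              cdPhi.continuousAt
            have hpair : Filter.Tendsto (fun w => (w, ψ w)) (nhdsWithin x (Set.Ioi x))
                (nhds (x, L)) :=
              (tendsto_id.mono_left nhdsWithin_le_nhds).prodMk_nhds hψtd
            apply Filter.Tendsto.congr' _ (hPhiC.tendsto.comp hpair)
            filter_upwards [Ioo_mem_nhdsGT hxr₀] with w hw
            have hev : g =ᶠ[nhds w] ψ := by
              filter_upwards [isOpen_Ioi.mem_nhds hw.1] with z hz
              exact hgψ z hz
            have hd := (hode w ⟨hw.1, lt_trans hw.2 hr₀y⟩).congr_of_eventuallyEq hev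
            exact hd.deriv.symm
        have huni := hIic.union hIci
        rw [Set.Iic_union_Ici] at huni
        exact hasDerivWithinAt_univ.1 huni
      · have hrIoo : r ∈ Set.Ioo x y := ⟨hgt, hr.2⟩
        have hev : g =ᶠ[nhds r] ψ := by
          filter_upwards [isOpen_Ioi.mem_nhds hgt] with z hz
          exact hgψ z hz
        have hd := (hode r hrIoo).congr_of_eventuallyEq hev
        rw [hgψ r hgt]
        exact hd
    have hssub : Set.Ioo x y ⊂ Set.Ioo (x - ε/2) y := by
      refine (Set.ssubset_iff_of_subset (Set.Ioo_subset_Ioo (by linarith) le_rfl)).2 ?_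
      exact ⟨x, ⟨by linarith, hxy⟩, fun hc => absurd hc.1 (lt_irrefl x)⟩
    exact hmax (x - ε/2) y g (by linarith) le_rfl hssub (fun w hw => hgψ w hw.1) hgderiv
  -- conclusion
  refine ⟨x, ⟨hx1, hxr₀⟩, ?_⟩
  rw [Filter.tendsto_atTop]
  intro M
  obtain ⟨_, ⟨r, hrmem, rfl⟩, hrM⟩ := not_bddAbove_iff.1 hub M
  filter_upwards [Ioo_mem_nhdsGT hrmem.1] with s hs
  have hs' : s ∈ Set.Ioc x r₀ := ⟨hs.1, (lt_trans hs.2 hrmem.2).le⟩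
  exact le_trans hrM.le (hanti hs' ⟨hrmem.1, hrmem.2.le⟩ hs.2.le)
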